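/- Let Γ be an infinite cardinal and 𝒜 ⊆ [Γ]^Γ an almost disjoint family. Then c_0(𝒜) embeds isometrically into the quotient Banach space Y_𝒜 / Z_𝒜; more precisely, the linear map sending the standard unit vector δ_A to the coset of 1_A extends to a linear isometry of c_0(𝒜) into Y_𝒜 / Z_𝒜. -/

import Mathlib

open Cardinal Set

noncomputable def ind {Γ : Type*} (A : Set Γ) : lp (fun _ : Γ => ℝ) ⊤ :=
  ⟨A.indicator 1, memℓp_infty ⟨1, by
    rintro r ⟨γ, rfl⟩
    by_cases h : γ ∈ A <;> simp [Set.indicator_apply, h]⟩⟩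

def AlmostDisjoint {Γ : Type*} (𝒜 : Set (Set Γ)) : Prop :=
  (∀ A ∈ 𝒜, #A = #Γ) ∧ ∀ A ∈ 𝒜, ∀ B ∈ 𝒜, A ≠ B → #(↥(A ∩ B)) < #Γ

noncomputable def Ysub {Γ : Type*} (𝒜 : Set (Set Γ)) : Submodule ℝ (lp (fun _ : Γ => ℝ) ⊤) :=
  (Submodule.span ℝ
    {y | ∃ (n : ℕ) (A : Fin (n + 1) → Set Γ), (∀ i, A i ∈ 𝒜) ∧ y = ind (⋂ i, A i)}).topologicalClosure

def Zgen {Γ : Type*} (𝒜 : Set (Set Γ)) : Set (lp (fun _ : Γ => ℝ) ⊤) :=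
  {y | ∃ (n : ℕ) (A : Fin (n + 2) → Set Γ),
    (∀ i, A i ∈ 𝒜) ∧ Function.Injective A ∧ y = ind (⋂ i, A i)}

noncomputable def Zsub {Γ : Type*} (𝒜 : Set (Set Γ)) : Submodule ℝ (lp (fun _ : Γ => ℝ) ⊤) :=
  (Submodule.span ℝ (Zgen 𝒜)).topologicalClosure

/-- The canonical copy of $c_0(\iota)$ inside $\ell_\infty(\iota)$: the closed linear span
of the standard unit vectors. -/
noncomputable def c0sub (ι : Type*) : Submodule ℝ (lp (fun _ : ι => ℝ) ⊤) :=
  (Submodule.span ℝ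
    {x : lp (fun _ : ι => ℝ) ⊤ | ∃ i : ι, ⇑x = Set.indicator {i} (1 : ι → ℝ)}).topologicalClosure

/-! ### Auxiliary lemmas -/

lemma ind_coe {Γ : Type*} (A : Set Γ) : ⇑(ind A) = A.indicator 1 := rfl

lemma ind_apply {Γ : Type*} (A : Set Γ) (γ : Γ) : ind A γ = A.indicator 1 γ := rfl

noncomputable def lpcoe (ι : Type*) : lp (fun _ : ι => ℝ) ⊤ →ₗ[ℝ] (ι → ℝ) where
  toFun f := ⇑f
  map_add' := lp.coeFn_add
  map_smul' := lp.coeFn_smul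

lemma sum_smul_ind_apply {ι κ : Type*} (s : Finset κ) (r : κ → ℝ) (T : κ → Set ι) (x : ι) :
    (∑ k ∈ s, r k • ind (T k) : lp (fun _ : ι => ℝ) ⊤) x
      = ∑ k ∈ s, r k * (T k).indicator 1 x := by
  have h := congrFun (map_sum (lpcoe ι) (fun k => r k • ind (T k)) s) x
  simp only [lpcoe, LinearMap.coe_mk, AddHom.coe_mk] at h
  rw [h, Finset.sum_apply]
  refine Finset.sum_congr rfl fun k _ => ?_
  rw [lp.coeFn_smul, Pi.smul_apply, ind_apply, smul_eq_mul]

lemma ind_empty {Γ : Type*} : (ind (∅ : Set Γ)) = 0 := by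
  apply lp.ext; rw [ind_coe, lp.coeFn_zero]; funext x; simp

lemma ind_union_add_ind_inter {Γ : Type*} (P Q : Set Γ) :
    ind (P ∪ Q) + ind (P ∩ Q) = ind P + ind Q := by
  apply lp.ext
  rw [lp.coeFn_add, lp.coeFn_add]
  funext γ
  by_cases hP : γ ∈ P <;> by_cases hQ : γ ∈ Q <;>
    simp [ind_coe, Set.indicator_apply, hP, hQ]

def IsZset {Γ : Type*} (𝒜 : Set (Set Γ)) (S : Set Γ) : Prop :=
  ∃ t : Finset (Set Γ), ↑t ⊆ 𝒜 ∧ 2 ≤ t.card ∧ S = ⋂₀ ↑t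

section
variable {Γ : Type*} {𝒜 : Set (Set Γ)}

lemma IsZset.inter {S T : Set Γ} (hS : IsZset 𝒜 S) (hT : IsZset 𝒜 T) :
    IsZset 𝒜 (S ∩ T) := by
  classical
  obtain ⟨t, ht, hc, rfl⟩ := hS
  obtain ⟨u, hu, hc', rfl⟩ := hT
  refine ⟨t ∪ u, ?_, le_trans hc (Finset.card_le_card Finset.subset_union_left), ?_⟩
  · push_cast; exact Set.union_subset ht hu
  · push_cast; rw [Set.sInter_union]

lemma IsZset.mem_Zgen {S : Set Γ} (hS : IsZset 𝒜 S) : ind S ∈ Zgen 𝒜 := by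
  obtain ⟨t, ht, hc, rfl⟩ := hS
  obtain ⟨n, hn⟩ : ∃ n, t.card = n + 2 := ⟨t.card - 2, by omega⟩
  refine ⟨n, fun i => (t.equivFin.symm (Fin.cast hn.symm i)).1, fun i =>
      ht (t.equivFin.symm (Fin.cast hn.symm i)).2, ?_, ?_⟩
  · intro i j h
    have := t.equivFin.symm.injective (Subtype.ext h)
    exact Fin.cast_injective _ this
  · congr 1
    ext γ
    simp only [Set.mem_iInter, Set.mem_sInter, Finset.mem_coe]
    constructor
    · intro h i
      exact h _ (t.equivFin.symm (Fin.cast hn.symm i)).2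
    · intro h s hs
      have := h (Fin.cast hn (t.equivFin ⟨s, hs⟩))
      simpa using this

lemma IsZset.exists_superset_ne {S : Set Γ} (hS : IsZset 𝒜 S) (A₀ : Set Γ) :
    ∃ B ∈ 𝒜, B ≠ A₀ ∧ S ⊆ B := by
  obtain ⟨t, ht, hc, rfl⟩ := hS
  obtain ⟨B, hBt, hBne⟩ := Finset.exists_mem_ne (s := t) (by omega) A₀
  exact ⟨B, ht hBt, hBne, Set.sInter_subset_of_mem hBt⟩

lemma Zgen_isZset {y : lp (fun _ : Γ => ℝ) ⊤} (hy : y ∈ Zgen 𝒜) :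
    ∃ S : Set Γ, IsZset 𝒜 S ∧ y = ind S := by
  classical
  obtain ⟨n, A, hA, hinj, rfl⟩ := hy
  refine ⟨⋂ i, A i, ⟨Finset.image A Finset.univ, ?_, ?_, ?_⟩, rfl⟩
  · intro S hS
    simp only [Finset.coe_image, Finset.coe_univ, Set.image_univ, Set.mem_range] at hS
    obtain ⟨i, rfl⟩ := hS; exact hA i
  · rw [Finset.card_image_of_injective _ hinj, Finset.card_univ, Fintype.card_fin]; omega
  · ext γ
    simp [Set.mem_iInter]

lemma ind_biUnion_mem_span {ι : Type*} (s : Finset ι) (S : ι → Set Γ)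
    (hS : ∀ i ∈ s, IsZset 𝒜 (S i)) :
    ind (⋃ i ∈ s, S i) ∈ Submodule.span ℝ (Zgen 𝒜) := by
  classical
  induction s using Finset.induction_on generalizing S with
  | empty => simp [ind_empty]
  | @insert a s ha ih =>
    have h1 : ind (⋃ i ∈ (insert a s : Finset ι), S i) =
        ind (S a) + ind (⋃ i ∈ s, S i) - ind (S a ∩ ⋃ i ∈ s, S i) := by
      have := ind_union_add_ind_inter (S a) (⋃ i ∈ s, S i)
      rw [Finset.set_biUnion_insert]
      linear_combination (norm := abel) this
    rw [h1]
    have hmem : ∀ i ∈ s, IsZset 𝒜 (S i) := fun i hi => hS i (Finset.mem_insert_of_mem hi)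
    have h2 : ind (S a ∩ ⋃ i ∈ s, S i) ∈ Submodule.span ℝ (Zgen 𝒜) := by
      rw [Set.inter_iUnion₂]
      exact ih _ (fun i hi => (hS a (Finset.mem_insert_self a s)).inter (hmem i hi))
    have h3 : ind (S a) ∈ Submodule.span ℝ (Zgen 𝒜) :=
      Submodule.subset_span (hS a (Finset.mem_insert_self a s)).mem_Zgen
    exact Submodule.sub_mem _ (Submodule.add_mem _ h3 (ih _ hmem)) h2

lemma card_biUnion_lt {ι : Type*} (s : Finset ι) (E : ι → Set Γ) {κ : Cardinal}
    (hκ : ℵ₀ ≤ κ) (hE : ∀ i ∈ s, #(E i) < κ) : #(⋃ i ∈ s, E i) < κ := by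
  classical
  induction s using Finset.induction_on with
  | empty => simp only [Finset.notMem_empty, Set.iUnion_of_empty, Set.iUnion_empty]
             simpa using lt_of_lt_of_le aleph0_pos hκ
  | @insert a s ha ih =>
    rw [Finset.set_biUnion_insert]
    refine lt_of_le_of_lt (mk_union_le _ _) (Cardinal.add_lt_of_lt hκ
      (hE a (Finset.mem_insert_self a s)) (ih fun i hi => hE i (Finset.mem_insert_of_mem hi)))

lemma ind_mem_Ysub {A : Set Γ} (hA : A ∈ 𝒜) : ind A ∈ Ysub 𝒜 := by
  refine Submodule.le_topologicalClosure _ (Submodule.subset_span ⟨0, fun _ => A, fun _ => hA, ?_⟩)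
  rw [Set.iInter_const]

lemma Zsub_le_Ysub : Zsub 𝒜 ≤ Ysub 𝒜 := by
  refine Submodule.topologicalClosure_mono (Submodule.span_mono ?_)
  rintro y ⟨n, A, hA, hinj, rfl⟩
  exact ⟨n + 1, A, hA, rfl⟩

end

/-! ### The vectors -/

noncomputable def vY {Γ : Type*} (𝒜 : Set (Set Γ)) (c : ↥𝒜 →₀ ℝ) : lp (fun _ : Γ => ℝ) ⊤ :=
  ∑ A ∈ c.support, c A • ind (A : Set Γ)

noncomputable def xC {Γ : Type*} (𝒜 : Set (Set Γ)) (c : ↥𝒜 →₀ ℝ) : lp (fun _ : ↥𝒜 => ℝ) ⊤ :=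
  ∑ A ∈ c.support, c A • ind ({A} : Set ↥𝒜)

section
variable {Γ : Type*} {𝒜 : Set (Set Γ)}

lemma vY_mem (c : ↥𝒜 →₀ ℝ) : vY 𝒜 c ∈ Ysub 𝒜 :=
  Submodule.sum_mem _ fun A _ => Submodule.smul_mem _ _ (ind_mem_Ysub A.2)

lemma xC_apply (c : ↥𝒜 →₀ ℝ) (B : ↥𝒜) : xC 𝒜 c B = c B := by
  rw [xC, sum_smul_ind_apply]
  rw [Finset.sum_eq_single B]
  · by_cases hB : B ∈ c.support
    · simp
    · simp [Finsupp.notMem_support_iff.mp hB]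
  · intro A _ hAB
    have : B ∉ ({A} : Set ↥𝒜) := fun h => hAB (Set.mem_singleton_iff.mp h).symm
    simp [Set.indicator_of_notMem this]
  · intro hB
    simp [Finsupp.notMem_support_iff.mp hB]

end

/-! ### The two norm estimates -/

section
variable {Γ : Type*} [Infinite Γ] {𝒜 : Set (Set Γ)}

lemma abs_le_quotient_norm (h𝒜 : AlmostDisjoint 𝒜) (c : ↥𝒜 →₀ ℝ) (A₀ : ↥𝒜) :
    |c A₀| ≤ ‖(Submodule.Quotient.mk ⟨vY 𝒜 c, vY_mem c⟩ :
      ↥(Ysub 𝒜) ⧸ (Zsub 𝒜).comap (Ysub 𝒜).subtype)‖ := by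
  classical
  have haleph : ℵ₀ ≤ #Γ := Cardinal.infinite_iff.mp inferInstance
  have core : ∀ z ∈ Submodule.span ℝ (Zgen 𝒜), |c A₀| ≤ ‖vY 𝒜 c + z‖ := by
    intro z hz
    obtain ⟨n, f, g, rfl⟩ := Submodule.mem_span_set'.mp hz
    choose S hS hgS using fun i : Fin n => Zgen_isZset (g i).2
    choose B hB hBne hSB using fun i : Fin n => (hS i).exists_superset_ne (↑A₀)
    set E : Set Γ := (⋃ A ∈ c.support.erase A₀, ((A₀ : Set Γ) ∩ ↑A)) ∪
      (⋃ i ∈ (Finset.univ : Finset (Fin n)), ((A₀ : Set Γ) ∩ B i)) with hE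
    have hEsmall : #E < #Γ := by
      refine lt_of_le_of_lt (mk_union_le _ _) (Cardinal.add_lt_of_lt haleph ?_ ?_)
      · refine card_biUnion_lt _ _ haleph fun A hA => ?_
        refine h𝒜.2 _ A₀.2 _ A.2 fun h => ?_
        exact (Finset.mem_erase.mp hA).1 (Subtype.ext h.symm)
      · refine card_biUnion_lt _ _ haleph fun i _ => ?_
        exact h𝒜.2 _ A₀.2 _ (hB i) fun h => hBne i h.symm
    have hA₀sub : ¬ ((A₀ : Set Γ) ⊆ E) := by
      intro hsub
      have hle := Cardinal.mk_le_mk_of_subset hsub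
      rw [h𝒜.1 _ A₀.2] at hle
      exact absurd (lt_of_le_of_lt hle hEsmall) (lt_irrefl _)
    obtain ⟨γ, hγA, hγE⟩ := Set.not_subset.mp hA₀sub
    have hvY : vY 𝒜 c γ = c A₀ := by
      rw [vY, sum_smul_ind_apply, Finset.sum_eq_single A₀]
      · rw [Set.indicator_of_mem hγA, Pi.one_apply, mul_one]
      · intro A hA hAne
        have hγnA : γ ∉ (A : Set Γ) := by
          intro hγ
          exact hγE (Set.mem_union_left _ (Set.mem_biUnion
            (Finset.mem_erase.mpr ⟨hAne, hA⟩) ⟨hγA, hγ⟩))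
        rw [Set.indicator_of_notMem hγnA, mul_zero]
      · intro hA₀
        rw [Finsupp.notMem_support_iff.mp hA₀, zero_mul]
    have hz0 : (∑ i : Fin n, f i • (g i : lp (fun _ : Γ => ℝ) ⊤)) γ = 0 := by
      have hrw : (∑ i : Fin n, f i • (g i : lp (fun _ : Γ => ℝ) ⊤))
          = ∑ i : Fin n, f i • ind (S i) := by
        refine Finset.sum_congr rfl fun i _ => ?_
        rw [hgS i]
      rw [hrw, sum_smul_ind_apply]
      refine Finset.sum_eq_zero fun i _ => ?_
      have hγnS : γ ∉ S i := fun hγ =>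
        hγE (Set.mem_union_right _ (Set.mem_biUnion (Finset.mem_univ i) ⟨hγA, hSB i hγ⟩))
      rw [Set.indicator_of_notMem hγnS, mul_zero]
    have happly : (vY 𝒜 c + ∑ i : Fin n, f i • (g i : lp (fun _ : Γ => ℝ) ⊤)) γ = c A₀ := by
      have h := congrFun (lp.coeFn_add (vY 𝒜 c) (∑ i : Fin n, f i • (g i : lp (fun _ : Γ => ℝ) ⊤))) γ
      rw [h, Pi.add_apply, hvY, hz0, add_zero]
    calc |c A₀| = ‖(vY 𝒜 c + ∑ i : Fin n, f i • (g i : lp (fun _ : Γ => ℝ) ⊤)) γ‖ := by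
          rw [happly, Real.norm_eq_abs]
      _ ≤ _ := lp.norm_apply_le_norm ENNReal.top_ne_zero _ γ
  have hZ : ∀ z ∈ Zsub 𝒜, |c A₀| ≤ ‖vY 𝒜 c + z‖ := by
    intro z hz
    have hcl : IsClosed {z : lp (fun _ : Γ => ℝ) ⊤ | |c A₀| ≤ ‖vY 𝒜 c + z‖} :=
      isClosed_le continuous_const ((continuous_const.add continuous_id).norm)
    have hmem : z ∈ closure (Submodule.span ℝ (Zgen 𝒜) : Set (lp (fun _ : Γ => ℝ) ⊤)) := by
      rw [← Submodule.topologicalClosure_coe]; exact hz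
    exact closure_minimal core hcl hmem
  refine le_of_forall_pos_le_add fun ε hε => ?_
  obtain ⟨m, hm, hlt⟩ := Submodule.Quotient.norm_mk_lt
    (Submodule.Quotient.mk ⟨vY 𝒜 c, vY_mem c⟩ :
      ↥(Ysub 𝒜) ⧸ (Zsub 𝒜).comap (Ysub 𝒜).subtype) hε
  have hmem : ((m : lp (fun _ : Γ => ℝ) ⊤) - vY 𝒜 c) ∈ Zsub 𝒜 := by
    have h := (Submodule.Quotient.eq _).mp hm
    simpa using Submodule.mem_comap.mp h
  have hle : |c A₀| ≤ ‖vY 𝒜 c + ((m : lp (fun _ : Γ => ℝ) ⊤) - vY 𝒜 c)‖ := hZ _ hmem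
  rw [add_sub_cancel] at hle
  exact le_trans hle (le_of_lt hlt)

lemma quotient_norm_le (h𝒜 : AlmostDisjoint 𝒜) (c : ↥𝒜 →₀ ℝ) :
    ‖(Submodule.Quotient.mk ⟨vY 𝒜 c, vY_mem c⟩ :
      ↥(Ysub 𝒜) ⧸ (Zsub 𝒜).comap (Ysub 𝒜).subtype)‖ ≤ ‖xC 𝒜 c‖ := by
  classical
  set U : Set Γ := ⋃ p ∈ c.support.offDiag, ((p.1 : Set Γ) ∩ (p.2 : Set Γ)) with hU
  set z : lp (fun _ : Γ => ℝ) ⊤ := ∑ A ∈ c.support, c A • ind ((A : Set Γ) ∩ U) with hzdef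
  have hzspan : z ∈ Submodule.span ℝ (Zgen 𝒜) := by
    refine Submodule.sum_mem _ fun A hA => Submodule.smul_mem _ _ ?_
    have hrw : (A : Set Γ) ∩ U
        = ⋃ p ∈ c.support.offDiag, ((A : Set Γ) ∩ ((p.1 : Set Γ) ∩ (p.2 : Set Γ))) := by
      rw [hU, Set.inter_iUnion₂]
    rw [hrw]
    refine ind_biUnion_mem_span _ _ fun p hp => ?_
    have hne : (p.1 : Set Γ) ≠ (p.2 : Set Γ) := by
      have h := (Finset.mem_offDiag.mp hp).2.2
      exact fun hh => h (Subtype.ext hh)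
    refine ⟨{(A : Set Γ), (p.1 : Set Γ), (p.2 : Set Γ)}, ?_, ?_, ?_⟩
    · intro s hs
      simp only [Finset.coe_insert, Set.mem_insert_iff, Finset.coe_singleton,
        Set.mem_singleton_iff] at hs
      rcases hs with rfl | rfl | rfl
      exacts [A.2, p.1.2, p.2.2]
    · calc 2 = ({(p.1 : Set Γ), (p.2 : Set Γ)} : Finset (Set Γ)).card :=
            (Finset.card_pair hne).symm
        _ ≤ _ := Finset.card_le_card (by
            intro s hs
            simp only [Finset.mem_insert, Finset.mem_singleton] at hs ⊢
            tauto)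
    · simp only [Finset.coe_insert, Set.sInter_insert, Finset.coe_singleton,
        Set.sInter_singleton]
  have hzZ : z ∈ Zsub 𝒜 := Submodule.le_topologicalClosure _ hzspan
  have hzY : z ∈ Ysub 𝒜 := Zsub_le_Ysub hzZ
  have hmk : (Submodule.Quotient.mk ⟨vY 𝒜 c, vY_mem c⟩ :
        ↥(Ysub 𝒜) ⧸ (Zsub 𝒜).comap (Ysub 𝒜).subtype)
      = Submodule.Quotient.mk (⟨vY 𝒜 c, vY_mem c⟩ - ⟨z, hzY⟩) := by
    rw [Submodule.Quotient.eq]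
    refine Submodule.mem_comap.mpr ?_
    simpa using hzZ
  rw [hmk]
  refine le_trans (Submodule.Quotient.norm_mk_le _ _) ?_
  have hnorm : ‖(⟨vY 𝒜 c, vY_mem c⟩ - ⟨z, hzY⟩ : ↥(Ysub 𝒜))‖ = ‖vY 𝒜 c - z‖ := rfl
  rw [hnorm]
  refine lp.norm_le_of_forall_le (norm_nonneg _) fun γ => ?_
  have happ : (vY 𝒜 c - z) γ = ∑ A ∈ c.support,
      c A * ((A : Set Γ).indicator 1 γ - ((A : Set Γ) ∩ U).indicator 1 γ) := by
    have h := congrFun (lp.coeFn_sub (vY 𝒜 c) z) γ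
    rw [h, Pi.sub_apply, vY, hzdef, sum_smul_ind_apply, sum_smul_ind_apply,
      ← Finset.sum_sub_distrib]
    refine Finset.sum_congr rfl fun A _ => ?_
    ring
  rw [happ]
  by_cases hγU : γ ∈ U
  · have : ∀ A ∈ c.support,
        c A * ((A : Set Γ).indicator 1 γ - ((A : Set Γ) ∩ U).indicator 1 γ) = 0 := by
      intro A _
      by_cases hγA : γ ∈ (A : Set Γ)
      · have h2 : γ ∈ (A : Set Γ) ∩ U := Set.mem_inter hγA hγU
        rw [Set.indicator_of_mem hγA, Set.indicator_of_mem h2, sub_self, mul_zero]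
      · have h2 : γ ∉ (A : Set Γ) ∩ U := fun h => hγA (Set.mem_of_mem_inter_left h)
        rw [Set.indicator_of_notMem hγA, Set.indicator_of_notMem h2, sub_self, mul_zero]
    rw [Finset.sum_eq_zero this, norm_zero]
    exact norm_nonneg _
  · have hsimp : ∀ A ∈ c.support,
        c A * ((A : Set Γ).indicator 1 γ - ((A : Set Γ) ∩ U).indicator 1 γ)
          = c A * (A : Set Γ).indicator 1 γ := by
      intro A _
      have h2 : γ ∉ (A : Set Γ) ∩ U := fun h => hγU (Set.mem_of_mem_inter_right h)
      rw [Set.indicator_of_notMem h2, sub_zero]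
    rw [Finset.sum_congr rfl hsimp]
    by_cases hex : ∃ A ∈ c.support, γ ∈ (A : Set Γ)
    · obtain ⟨A₀, hA₀s, hγA₀⟩ := hex
      rw [Finset.sum_eq_single A₀]
      · rw [Set.indicator_of_mem hγA₀, Pi.one_apply, mul_one]
        have h1 := lp.norm_apply_le_norm ENNReal.top_ne_zero (xC 𝒜 c) A₀
        rw [xC_apply] at h1
        exact h1
      · intro A hAs hAne
        have hγnA : γ ∉ (A : Set Γ) := by
          intro hγA
          refine hγU ?_
          have h2 : γ ∈ (((A, A₀).1 : ↥𝒜) : Set Γ) ∩ (((A, A₀).2 : ↥𝒜) : Set Γ) :=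
            Set.mem_inter hγA hγA₀
          exact Set.mem_biUnion (Finset.mem_offDiag.mpr ⟨hAs, hA₀s, hAne⟩) h2
        rw [Set.indicator_of_notMem hγnA, mul_zero]
      · intro h
        exact absurd hA₀s h
    · push_neg at hex
      have : ∀ A ∈ c.support, c A * (A : Set Γ).indicator 1 γ = 0 := fun A hA => by
        rw [Set.indicator_of_notMem (hex A hA), mul_zero]
      rw [Finset.sum_eq_zero this, norm_zero]
      exact norm_nonneg _

lemma norm_xC_eq (h𝒜 : AlmostDisjoint 𝒜) (c : ↥𝒜 →₀ ℝ) :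
    ‖xC 𝒜 c‖ = ‖(Submodule.Quotient.mk ⟨vY 𝒜 c, vY_mem c⟩ :
      ↥(Ysub 𝒜) ⧸ (Zsub 𝒜).comap (Ysub 𝒜).subtype)‖ := by
  refine le_antisymm ?_ (quotient_norm_le h𝒜 c)
  refine lp.norm_le_of_forall_le (norm_nonneg _) fun A => ?_
  rw [xC_apply, Real.norm_eq_abs]
  exact abs_le_quotient_norm h𝒜 c A

end

set_option maxHeartbeats 2000000 in
set_option synthInstance.maxHeartbeats 1000000 in
theorem c0_embeds_isometrically_in_Y_quotient_Z {Γ : Type*} [Infinite Γ] (𝒜 : Set (Set Γ))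
    (h𝒜 : AlmostDisjoint 𝒜) :
    ∃ Φ : ↥(c0sub ↥𝒜) →ₗᵢ[ℝ] (↥(Ysub 𝒜) ⧸ (Zsub 𝒜).comap (Ysub 𝒜).subtype),
      ∀ (A : ↥𝒜) (x : ↥(c0sub ↥𝒜)),
        ⇑(x : lp (fun _ : ↥𝒜 => ℝ) ⊤) = Set.indicator {A} (1 : ↥𝒜 → ℝ) →
        ∀ y : ↥(Ysub 𝒜), (y : lp (fun _ : Γ => ℝ) ⊤) = ind (A : Set Γ) →
          Φ x = Submodule.Quotient.mk y := by
  classical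
  haveI : Fact (1 ≤ (⊤ : ENNReal)) := ⟨le_top⟩
  haveI : CompleteSpace ↥(Ysub 𝒜) :=
    IsClosed.completeSpace_coe
      (hs := by unfold Ysub; exact Submodule.isClosed_topologicalClosure _)
  haveI hKc : IsClosed (((Zsub 𝒜).comap (Ysub 𝒜).subtype :
      Submodule ℝ ↥(Ysub 𝒜)) : Set ↥(Ysub 𝒜)) := by
    have h1 : IsClosed ((Zsub 𝒜 : Submodule ℝ _) : Set (lp (fun _ : Γ => ℝ) ⊤)) :=
      Submodule.isClosed_topologicalClosure _
    exact h1.preimage continuous_subtype_val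
  set K := (Zsub 𝒜).comap (Ysub 𝒜).subtype with hK
  set eA : ↥𝒜 → lp (fun _ : ↥𝒜 => ℝ) ⊤ := fun A => ind ({A} : Set ↥𝒜) with heA
  -- linear independence of the unit vectors
  have li : LinearIndependent ℝ eA := by
    rw [linearIndependent_iff']
    intro s g hsum i hi
    have h0 := congrArg (fun f : lp (fun _ : ↥𝒜 => ℝ) ⊤ => f i) hsum
    simp only [heA] at h0
    rw [sum_smul_ind_apply] at h0
    have hz : (0 : lp (fun _ : ↥𝒜 => ℝ) ⊤) i = 0 := congrFun (lp.coeFn_zero _ _) i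
    rw [hz] at h0
    rw [Finset.sum_eq_single i] at h0
    · have hmem : i ∈ ({i} : Set ↥𝒜) := Set.mem_singleton i
      rw [Set.indicator_of_mem hmem, Pi.one_apply, mul_one] at h0
      exact h0
    · intro j _ hne
      rw [Set.indicator_of_notMem
        (fun h => hne (Set.mem_singleton_iff.mp h).symm), mul_zero]
    · intro h
      exact absurd hi h
  set S := Submodule.span ℝ (Set.range eA) with hS
  let b : Module.Basis ↥𝒜 ℝ ↥S := Module.Basis.span li
  have hbcoe : ∀ A : ↥𝒜, ((b A : ↥S) : lp (fun _ : ↥𝒜 => ℝ) ⊤) = eA A :=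
    fun A => congrArg Subtype.val (Module.Basis.span_apply li A)
  -- value of an element of S
  have hx : ∀ x : ↥S, (x : lp (fun _ : ↥𝒜 => ℝ) ⊤) = xC 𝒜 (b.repr x) := by
    intro x
    conv_lhs => rw [← b.linearCombination_repr x]
    rw [Finsupp.linearCombination_apply, Finsupp.sum, xC, AddSubmonoidClass.coe_finset_sum]
    refine Finset.sum_congr rfl fun A _ => ?_
    rw [SetLike.val_smul, hbcoe]
  -- the linear map on S
  set f₀ : ↥𝒜 → (↥(Ysub 𝒜) ⧸ K) := fun A => K.mkQ ⟨ind (A : Set Γ), ind_mem_Ysub A.2⟩ with hf₀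
  set g₀ : ↥S →ₗ[ℝ] (↥(Ysub 𝒜) ⧸ K) := b.constr ℕ f₀ with hg₀
  have hsum_val : ∀ c : ↥𝒜 →₀ ℝ,
      (∑ A ∈ c.support, c A • (⟨ind (A : Set Γ), ind_mem_Ysub A.2⟩ : ↥(Ysub 𝒜)))
        = ⟨vY 𝒜 c, vY_mem c⟩ := by
    intro c
    apply Subtype.ext
    rw [AddSubmonoidClass.coe_finset_sum]
    show _ = vY 𝒜 c
    rw [vY]
    refine Finset.sum_congr rfl fun A _ => ?_
    rw [SetLike.val_smul]
  have hg : ∀ x : ↥S, g₀ x = Submodule.Quotient.mk ⟨vY 𝒜 (b.repr x), vY_mem _⟩ := by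
    intro x
    rw [hg₀, Module.Basis.constr_apply, Finsupp.sum, hf₀]
    calc (∑ A ∈ (b.repr x).support,
          (b.repr x) A • K.mkQ ⟨ind (A : Set Γ), ind_mem_Ysub A.2⟩)
        = K.mkQ (∑ A ∈ (b.repr x).support,
            (b.repr x) A • ⟨ind (A : Set Γ), ind_mem_Ysub A.2⟩) := by
          rw [map_sum]
          exact Finset.sum_congr rfl fun A _ => (map_smul _ _ _).symm
      _ = _ := by rw [hsum_val, Submodule.mkQ_apply]
  have hnorm : ∀ x : ↥S, ‖g₀ x‖ = ‖x‖ := by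
    intro x
    calc ‖g₀ x‖ = ‖(Submodule.Quotient.mk ⟨vY 𝒜 (b.repr x), vY_mem _⟩ :
          ↥(Ysub 𝒜) ⧸ K)‖ := by rw [hg x]
      _ = ‖xC 𝒜 (b.repr x)‖ := (norm_xC_eq h𝒜 _).symm
      _ = ‖(x : lp (fun _ : ↥𝒜 => ℝ) ⊤)‖ := by rw [hx x]
      _ = ‖x‖ := rfl
  -- S sits inside c0sub
  have hset : {x : lp (fun _ : ↥𝒜 => ℝ) ⊤ | ∃ i : ↥𝒜, ⇑x = Set.indicator {i} (1 : ↥𝒜 → ℝ)}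
      = Set.range eA := by
    ext x
    constructor
    · rintro ⟨i, hxi⟩
      exact ⟨i, lp.ext hxi.symm⟩
    · rintro ⟨i, rfl⟩
      exact ⟨i, rfl⟩
  have hc0 : c0sub ↥𝒜 = S.topologicalClosure :=
    congrArg Submodule.topologicalClosure (congrArg (Submodule.span ℝ) hset)
  have hle : S ≤ c0sub ↥𝒜 := by
    rw [hc0]; exact Submodule.le_topologicalClosure S
  let ι₀ : ↥S →ₗᵢ[ℝ] ↥(c0sub ↥𝒜) :=
    { toLinearMap := Submodule.inclusion hle, norm_map' := fun x => rfl }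
  set e : ↥S →L[ℝ] ↥(c0sub ↥𝒜) := ι₀.toContinuousLinearMap with he
  have hd : DenseRange e := by
    intro y
    have hy : (y : lp (fun _ : ↥𝒜 => ℝ) ⊤) ∈ closure (S : Set (lp (fun _ : ↥𝒜 => ℝ) ⊤)) := by
      have h2 : (y : lp (fun _ : ↥𝒜 => ℝ) ⊤) ∈ S.topologicalClosure := by
        rw [← hc0]; exact y.2
      exact Set.mem_of_mem_of_subset h2 (Submodule.topologicalClosure_coe S).subset
    refine Metric.mem_closure_iff.mpr fun ε hε => ?_
    obtain ⟨w, hwS, hw⟩ := Metric.mem_closure_iff.mp hy ε hε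
    exact ⟨e ⟨w, hwS⟩, Set.mem_range_self _, by rw [Subtype.dist_eq]; exact hw⟩
  have hui : IsUniformInducing e := ι₀.isometry.isUniformInducing
  haveI : IsUniformAddGroup (↥(Ysub 𝒜) ⧸ K) := SeminormedAddCommGroup.to_isUniformAddGroup
  haveI hQc : CompleteSpace (↥(Ysub 𝒜) ⧸ K) := Submodule.Quotient.completeSpace _
  set g' : ↥S →L[ℝ] (↥(Ysub 𝒜) ⧸ K) :=
    LinearMap.mkContinuous g₀ 1 (fun x => by rw [one_mul]; exact (hnorm x).le) with hg'
  set Φc : ↥(c0sub ↥𝒜) →L[ℝ] (↥(Ysub 𝒜) ⧸ K) :=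
    ContinuousLinearMap.extend (𝕜 := ℝ) (E := ↥S) (F := ↥(Ysub 𝒜) ⧸ K)
      (Eₗ := ↥(c0sub ↥𝒜)) g' e with hΦc
  have hΦe : ∀ x : ↥S, Φc (e x) = g₀ x := fun x =>
    @ContinuousLinearMap.extend_eq _ _ _ _ _ _ _ _ _ _ _ _ _ _ _ _ _ _ _ _ _ _ _ g' hQc e hd hui x
  have hiso : ∀ v : ↥(c0sub ↥𝒜), ‖Φc v‖ = ‖v‖ := by
    refine isClosed_property hd (isClosed_eq Φc.continuous.norm continuous_norm) fun x => ?_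
    rw [hΦe x, hnorm x]
    rfl
  refine ⟨{ toLinearMap := Φc.toLinearMap, norm_map' := hiso }, ?_⟩
  intro A x hxind y hy
  have hmemS : eA A ∈ S := Submodule.subset_span ⟨A, rfl⟩
  have hxe : x = e ⟨eA A, hmemS⟩ := by
    apply Subtype.ext
    apply lp.ext
    rw [hxind]
    rfl
  have hbA : (⟨eA A, hmemS⟩ : ↥S) = b A := Subtype.ext (hbcoe A).symm
  have hy' : y = ⟨ind (A : Set Γ), ind_mem_Ysub A.2⟩ := Subtype.ext hy
  show Φc x = Submodule.Quotient.mk y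
  rw [hxe, hΦe, hbA, hg₀, Module.Basis.constr_basis, hf₀, hy']
  rfl
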